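/- For every L ≥ 1 and every integer m ≥ 1, the m-fold multiple commutator of the regularized Hamiltonian with the annihilation operator satisfies [H_L, a]_m = (L^m Π_L + (−1)^m Q_{L−1}) a as linear maps on D. -/
import Mathlib


open Filter Topology
open scoped ENNReal

noncomputable section

/-- The boson Hilbert space `H = ℓ²(ℕ, ℂ)`. -/
abbrev Hb : Type := lp (fun _ : ℕ => ℂ) 2

/-- The standard orthonormal basis vectors `e n` of `H`. -/
def eb (n : ℕ) : Hb := lp.single 2 n (1 : ℂ)

/-- The dense subspace `D` of finitely supported linear combinations of the `e n`,
modelled as finitely supported sequences. -/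
abbrev Db : Type := ℕ →₀ ℂ

/-- The inclusion `D → H`. -/
def incl : Db →ₗ[ℂ] Hb := Finsupp.linearCombination ℂ eb

/-- The annihilation operator `a : D → D`, `a e₀ = 0`, `a eₙ = √n e_{n-1}`. -/
def aOp : Db →ₗ[ℂ] Db :=
  Finsupp.lsum ℂ fun n => (Real.sqrt n : ℂ) • Finsupp.lsingle (n - 1)

/-- The creation operator `a† : D → D`, `a† eₙ = √(n+1) e_{n+1}`. -/
def adOp : Db →ₗ[ℂ] Db :=
  Finsupp.lsum ℂ fun n => (Real.sqrt (n + 1) : ℂ) • Finsupp.lsingle (n + 1)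

/-- The number operator `N = a† a` on `D`. -/
def ND : Db →ₗ[ℂ] Db := adOp ∘ₗ aOp

/-- The projection `Π_l` restricted to `D`. -/
def PiD (l : ℕ) : Db →ₗ[ℂ] Db :=
  Finsupp.lsum ℂ fun n => if n = l then Finsupp.lsingle n else 0

/-- `Q_L = Σ_{l=0}^L Π_l` on `D`. -/
def QD (L : ℕ) : Db →ₗ[ℂ] Db := ∑ l ∈ Finset.range (L + 1), PiD l

/-- The orthogonal projection `Π_l` of `H` onto `ℂ e_l`. -/
def PiH (l : ℕ) : Hb →L[ℂ] Hb := (innerSL ℂ (eb l)).smulRight (eb l)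

/-- `Q_L = Σ_{l=0}^L Π_l` on `H`. -/
def QH (L : ℕ) : Hb →L[ℂ] Hb := ∑ l ∈ Finset.range (L + 1), PiH l

/-- For a linear map `T : D → H`, the bounded operator `Π_l T Π_s` on `H`
(it is `x ↦ ⟪e_s, x⟫ • Π_l (T e_s)`, of rank at most one). -/
def sandwich (T : Db →ₗ[ℂ] Hb) (l s : ℕ) : Hb →L[ℂ] Hb :=
  (innerSL ℂ (eb s)).smulRight (PiH l (T (Finsupp.single s 1)))

/-- Membership in the set `𝒞` of positive, bounded, continuous functions on `[0,∞)`
decreasing faster than any inverse power. -/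
structure IsC (f : ℝ → ℝ) : Prop where
  cont : ContinuousOn f (Set.Ici (0 : ℝ))
  bdd : ∃ B : ℝ, ∀ x ∈ Set.Ici (0 : ℝ), f x ≤ B
  pos : ∀ x ∈ Set.Ici (0 : ℝ), 0 < f x
  decay : ∀ n : ℕ, Tendsto (fun x : ℝ => x ^ n * f x) atTop (nhds 0)

/-- The seminorm `p_{f,k}(T) = Σ_{l,s} f(l) s^k ‖Π_l T Π_s‖ ∈ [0,∞]`. -/
def semin (f : ℝ → ℝ) (k : ℕ) (T : Db →ₗ[ℂ] Hb) : ℝ≥0∞ :=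
  ∑' (l : ℕ) (s : ℕ), ENNReal.ofReal (f l * (s : ℝ) ^ k * ‖sandwich T l s‖)

end

noncomputable section

lemma aOp_single (n : ℕ) (b : ℂ) :
    aOp (Finsupp.single n b) = (Real.sqrt n : ℂ) • Finsupp.single (n - 1) b := by
  simp [aOp, Finsupp.lsum_single, Finsupp.smul_single]

lemma adOp_single (n : ℕ) (b : ℂ) :
    adOp (Finsupp.single n b) = (Real.sqrt (n + 1) : ℂ) • Finsupp.single (n + 1) b := by
  simp [adOp, Finsupp.lsum_single, Finsupp.smul_single]

lemma ND_single (n : ℕ) (b : ℂ) :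
    ND (Finsupp.single n b) = (n : ℂ) • Finsupp.single n b := by
  cases n with
  | zero => simp [ND, aOp_single]
  | succ k =>
      simp only [ND, LinearMap.comp_apply, aOp_single, map_smul, Nat.add_sub_cancel,
        adOp_single, smul_smul]
      congr 1
      push_cast
      rw [← Complex.ofReal_mul, Real.mul_self_sqrt (by positivity)]
      push_cast
      ring

lemma PiD_single (l n : ℕ) (b : ℂ) :
    PiD l (Finsupp.single n b) = if n = l then Finsupp.single n b else 0 := by
  simp [PiD, Finsupp.lsum_single]
  split <;> simp

lemma QD_single (L n : ℕ) (b : ℂ) :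
    QD L (Finsupp.single n b) = if n ≤ L then Finsupp.single n b else 0 := by
  simp only [QD, LinearMap.sum_apply, PiD_single]
  rw [Finset.sum_ite_eq (Finset.range (L+1)) n (fun _ => Finsupp.single n b)]
  simp [Nat.lt_succ_iff]

lemma HL_single (L n : ℕ) (b : ℂ) :
    QD L (ND (QD L (Finsupp.single n b)))
      = if n ≤ L then (n : ℂ) • Finsupp.single n b else 0 := by
  rw [QD_single]
  split
  · next h => rw [ND_single, map_smul, QD_single, if_pos h]
  · simp

end

noncomputable section

lemma QND_single (L n : ℕ) (b : ℂ) :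
    QD L (ND (Finsupp.single n b)) = if n ≤ L then (n : ℂ) • Finsupp.single n b else 0 := by
  rw [ND_single, map_smul, QD_single]
  split <;> simp

lemma key1 (L : ℕ) (hL : 1 ≤ L) :
    (QD L * ND * QD L) * (PiD L * aOp) - (PiD L * aOp) * (QD L * ND * QD L)
      = (L : ℂ) • (PiD L * aOp) := by
  apply Finsupp.lhom_ext
  intro n b
  simp only [LinearMap.sub_apply, Module.End.mul_apply, LinearMap.smul_apply]
  rcases lt_trichotomy n (L + 1) with h | h | h
  · have h1 : n ≤ L := by omega
    have h2 : ¬ (n - 1 = L) := by omega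
    simp only [aOp_single, map_smul, PiD_single, QD_single, ND_single, HL_single,
      QND_single, h1, h2, if_true, if_false, eq_self_iff_true, smul_zero, map_zero,
      sub_zero, zero_sub, smul_smul, neg_zero, sub_self]
  · subst h
    have h1 : ¬ (L + 1 ≤ L) := by omega
    have e : L + 1 - 1 = L := by omega
    simp only [aOp_single, e, map_smul, PiD_single, HL_single, QND_single, le_refl,
      QD_single, h1, if_true, if_false, eq_self_iff_true, smul_zero, map_zero,
      sub_zero, smul_smul]
    congr 1
    ring
  · have h1 : ¬ (n ≤ L) := by omega
    have h2 : ¬ (n - 1 = L) := by omega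
    simp only [aOp_single, map_smul, PiD_single, QD_single, ND_single, HL_single,
      QND_single, h1, h2, if_true, if_false, eq_self_iff_true, smul_zero, map_zero,
      sub_zero, zero_sub, smul_smul, neg_zero, sub_self]

lemma key2 (L : ℕ) (hL : 1 ≤ L) :
    (QD L * ND * QD L) * (QD (L - 1) * aOp) - (QD (L - 1) * aOp) * (QD L * ND * QD L)
      = (-1 : ℂ) • (QD (L - 1) * aOp) := by
  apply Finsupp.lhom_ext
  intro n b
  simp only [LinearMap.sub_apply, Module.End.mul_apply, LinearMap.smul_apply]
  rcases lt_trichotomy n (L + 1) with h | h | h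
  · rcases Nat.eq_zero_or_pos n with rfl | hn
    · simp [aOp_single, HL_single, QND_single, QD_single]
    have h1 : n ≤ L := by omega
    have h2 : n - 1 ≤ L - 1 := by omega
    have h3 : n - 1 ≤ L := by omega
    simp only [aOp_single, map_smul, QD_single, h1, h2, h3, if_true, eq_self_iff_true,
      HL_single, QND_single, ND_single, smul_smul]
    rw [← sub_smul]
    congr 1
    have : ((n - 1 : ℕ) : ℂ) = (n : ℂ) - 1 := by push_cast [Nat.cast_sub hn]; ring
    rw [this]; ring
  · subst h
    have h1 : ¬ (L + 1 ≤ L) := by omega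
    have h2 : ¬ (L + 1 - 1 ≤ L - 1) := by omega
    simp only [aOp_single, map_smul, QD_single, HL_single, QND_single, h1, h2, if_false,
      smul_zero, map_zero, sub_zero, sub_self, neg_zero, neg_smul, one_smul]
  · have h1 : ¬ (n ≤ L) := by omega
    have h2 : ¬ (n - 1 ≤ L - 1) := by omega
    have h3 : ¬ (n - 1 ≤ L) := by omega
    simp only [aOp_single, map_smul, QD_single, HL_single, QND_single, h1, h2, h3,
      if_false, smul_zero, map_zero, sub_zero, sub_self, neg_zero, neg_smul, one_smul]

lemma keyBase (L : ℕ) (hL : 1 ≤ L) :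
    (QD L * ND * QD L) * aOp - aOp * (QD L * ND * QD L)
      = (L : ℂ) • (PiD L * aOp) + (-1 : ℂ) • (QD (L - 1) * aOp) := by
  apply Finsupp.lhom_ext
  intro n b
  simp only [LinearMap.sub_apply, LinearMap.add_apply, Module.End.mul_apply,
    LinearMap.smul_apply]
  rcases lt_trichotomy n (L + 1) with h | h | h
  · rcases Nat.eq_zero_or_pos n with rfl | hn
    · simp [aOp_single, HL_single, QND_single, QD_single, PiD_single]
    have h1 : n ≤ L := by omega
    have h2 : n - 1 ≤ L := by omega
    have h3 : ¬ (n - 1 = L) := by omega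
    have h4 : n - 1 ≤ L - 1 := by omega
    simp only [aOp_single, map_smul, QD_single, h1, h2, h4, if_true, eq_self_iff_true,
      HL_single, QND_single, ND_single, PiD_single, h3, if_false, smul_zero, zero_add,
      smul_smul]
    rw [← sub_smul]
    congr 1
    have : ((n - 1 : ℕ) : ℂ) = (n : ℂ) - 1 := by push_cast [Nat.cast_sub hn]; ring
    rw [this]; ring
  · subst h
    have h1 : ¬ (L + 1 ≤ L) := by omega
    have h2 : ¬ (L ≤ L - 1) := by omega
    have e : L + 1 - 1 = L := by omega
    simp only [aOp_single, e, map_smul, HL_single, QND_single, le_refl, h1, h2,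
      if_true, if_false, eq_self_iff_true, map_zero, smul_zero, sub_zero, PiD_single,
      QD_single, add_zero, smul_smul]
    congr 1
    ring
  · have h1 : ¬ (n ≤ L) := by omega
    have h2 : ¬ (n - 1 = L) := by omega
    have h3 : ¬ (n - 1 ≤ L - 1) := by omega
    have h4 : ¬ (n - 1 ≤ L) := by omega
    simp only [aOp_single, map_smul, QD_single, PiD_single, HL_single, QND_single,
      h1, h2, h3, h4, if_false, smul_zero, map_zero, sub_zero, sub_self, add_zero,
      zero_add]


/-- Iterated commutator of linear maps on `D`: `[X,Y]₀ = Y`, `[X,Y]ₘ = X[X,Y]_{m-1} - [X,Y]_{m-1}X`. -/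
def itComm (X Y : Db →ₗ[ℂ] Db) : ℕ → Db →ₗ[ℂ] Db
  | 0 => Y
  | m + 1 => X * itComm X Y m - itComm X Y m * X

lemma itComm_zero (X Y : Db →ₗ[ℂ] Db) : itComm X Y 0 = Y := by simp only [itComm]

lemma itComm_succ (X Y : Db →ₗ[ℂ] Db) (m : ℕ) :
    itComm X Y (m + 1) = X * itComm X Y m - itComm X Y m * X := by
  conv_lhs => rw [itComm]


/-- for every `L ≥ 1` and `m ≥ 1`,
`[H_L, a]ₘ = (Lᵐ Π_L + (-1)ᵐ Q_{L-1}) a` as linear maps on `D`, where `H_L = Q_L N Q_L`. -/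
theorem stmt4 (L : ℕ) (hL : 1 ≤ L) (m : ℕ) (hm : 1 ≤ m) :
    itComm (QD L * ND * QD L) aOp m
      = ((L : ℂ) ^ m • PiD L + (-1 : ℂ) ^ m • QD (L - 1)) * aOp := by
  obtain ⟨k, rfl⟩ : ∃ k, m = k + 1 := ⟨m - 1, by omega⟩
  clear hm
  induction k with
  | zero =>
      rw [itComm_succ, itComm_zero, keyBase L hL, add_mul, smul_mul_assoc,
        smul_mul_assoc, pow_one, pow_one]
  | succ k ih =>
      rw [itComm_succ, ih, add_mul, smul_mul_assoc, smul_mul_assoc]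
      have expand : ∀ c d : ℂ, ∀ A B C : Db →ₗ[ℂ] Db,
          A * (c • B + d • C) - (c • B + d • C) * A
            = c • (A * B - B * A) + d • (A * C - C * A) := by
        intro c d A B C
        simp only [mul_add, add_mul, mul_smul_comm, smul_mul_assoc, smul_sub]
        module
      rw [expand, key1 L hL, key2 L hL, smul_smul, smul_smul, add_mul,
        smul_mul_assoc, smul_mul_assoc]
      congr 2 <;> ring


end
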